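/- Let a be a positive integer and let u, v be integers. Then there exist positive integers α₁, α₂ and an integer β with 0 ≤ β < α₁ such that α₁·α₂ = a / gcd(a, u, v) and, for all integers m, l: a divides u·m + v·l if and only if there exist integers m₀, l₀ with m = α₁·m₀ + β·l₀ and l = α₂·l₀. In other words, the subgroup {(m,l) ∈ ℤ² : a ∣ u·m + v·l} of ℤ² is exactly the image of ℤ² under the upper-triangular matrix [[α₁, β],[0, α₂]], and this subgroup has index a / gcd(a,u,v) in ℤ². -/

import Mathlib

/-- The subgroup `{(m,l) ∈ ℤ² : a ∣ um + vl}` is the image of `ℤ²` under an upper-triangular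
matrix `[[α₁, β],[0, α₂]]` with `0 ≤ β < α₁` and `α₁·α₂ = a / gcd(a,u,v)`. -/
theorem upper_triangular_sublattice (a : ℕ) (ha : 0 < a) (u v : ℤ) :
    ∃ (α₁ α₂ : ℕ) (β : ℤ), 0 < α₁ ∧ 0 < α₂ ∧ 0 ≤ β ∧ β < (α₁ : ℤ) ∧
      α₁ * α₂ = a / Int.gcd (Int.gcd (a : ℤ) u) v ∧
      ∀ m l : ℤ,
        ((a : ℤ) ∣ u * m + v * l) ↔
          ∃ m₀ l₀ : ℤ, m = (α₁ : ℤ) * m₀ + β * l₀ ∧ l = (α₂ : ℤ) * l₀ := by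
  set g : ℕ := Int.gcd (a : ℤ) u with hg_def
  set d : ℕ := Int.gcd (g : ℤ) v with hd_def
  have hg : 0 < g := by
    rw [hg_def, Int.gcd_pos_iff]; left; exact_mod_cast ha.ne'
  have hd : 0 < d := by
    rw [hd_def, Int.gcd_pos_iff]; left; exact_mod_cast hg.ne'
  have hga : (g : ℤ) ∣ (a : ℤ) := Int.gcd_dvd_left _ _
  have hgu : (g : ℤ) ∣ u := Int.gcd_dvd_right _ _
  have hdg : (d : ℤ) ∣ (g : ℤ) := Int.gcd_dvd_left _ _
  have hdv : (d : ℤ) ∣ v := Int.gcd_dvd_right _ _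
  have hgaN : g ∣ a := Int.natCast_dvd_natCast.mp hga
  have hdgN : d ∣ g := Int.natCast_dvd_natCast.mp hdg
  set α₁ : ℕ := a / g with hα₁_def
  set α₂ : ℕ := g / d with hα₂_def
  have hα₁gN : α₁ * g = a := Nat.div_mul_cancel hgaN
  have hα₂dN : α₂ * d = g := Nat.div_mul_cancel hdgN
  have hα₁g : (α₁ : ℤ) * g = a := by exact_mod_cast hα₁gN
  have hα₂d : (α₂ : ℤ) * d = g := by exact_mod_cast hα₂dN
  have hα₁pos : 0 < α₁ := Nat.div_pos (Nat.le_of_dvd ha hgaN) hg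
  have hα₂pos : 0 < α₂ := Nat.div_pos (Nat.le_of_dvd hg hdgN) hd
  set u' : ℤ := u / g with hu'_def
  set v' : ℤ := v / d with hv'_def
  have hu : (g : ℤ) * u' = u := Int.mul_ediv_cancel' hgu
  have hv : (d : ℤ) * v' = v := Int.mul_ediv_cancel' hdv
  have hα₁cast : (α₁ : ℤ) = (a : ℤ) / g := by
    rw [hα₁_def]; exact Int.natCast_ediv a g
  have hα₂cast : (α₂ : ℤ) = (g : ℤ) / d := by
    rw [hα₂_def]; exact Int.natCast_ediv g d
  have hcop1 : IsCoprime (α₁ : ℤ) u' := by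
    rw [Int.isCoprime_iff_gcd_eq_one, hα₁cast, hu'_def]
    exact Int.gcd_div_gcd_div_gcd (by exact_mod_cast hg)
  have hcop2 : IsCoprime (α₂ : ℤ) v' := by
    rw [Int.isCoprime_iff_gcd_eq_one, hα₂cast, hv'_def]
    exact Int.gcd_div_gcd_div_gcd (by exact_mod_cast hd)
  obtain ⟨x, y, hxy⟩ := hcop1.symm
  -- hxy : x * u' + y * α₁ = 1
  set c : ℤ := -(x * v') with hc_def
  set β : ℤ := c % (α₁ : ℤ) with hβ_def
  have hα₁ne : (α₁ : ℤ) ≠ 0 := by exact_mod_cast hα₁pos.ne'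
  have hβ0 : 0 ≤ β := Int.emod_nonneg c hα₁ne
  have hβ1 : β < (α₁ : ℤ) := Int.emod_lt_of_pos c (by exact_mod_cast hα₁pos)
  have hkey : ∃ k : ℤ, u' * β + v' = (α₁ : ℤ) * k := by
    refine ⟨v' * y - u' * (c / (α₁ : ℤ)), ?_⟩
    rw [hβ_def, Int.emod_def]
    linear_combination (-v') * hxy
  obtain ⟨k, hk⟩ := hkey
  refine ⟨α₁, α₂, β, hα₁pos, hα₂pos, hβ0, hβ1, ?_, ?_⟩
  · exact (Nat.div_eq_of_eq_mul_left hd (by rw [← hα₁gN, ← hα₂dN]; ring)).symm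
  · intro m l
    constructor
    · rintro ⟨t, ht⟩
      have hgvl : (g : ℤ) ∣ v * l :=
        ⟨(α₁ : ℤ) * t - u' * m, by linear_combination ht + m * hu - t * hα₁g⟩
      have hdne : (d : ℤ) ≠ 0 := by exact_mod_cast hd.ne'
      have hα₂l : (α₂ : ℤ) ∣ v' * l := by
        obtain ⟨s, hs⟩ := hgvl
        refine ⟨s, mul_left_cancel₀ hdne ?_⟩
        linear_combination hs + l * hv - s * hα₂d
      obtain ⟨l₀, hl⟩ := hcop2.dvd_of_dvd_mul_left hα₂l
      have hgne : (g : ℤ) ≠ 0 := by exact_mod_cast hg.ne'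
      have h2 : u' * m + v' * l₀ = (α₁ : ℤ) * t := by
        apply mul_left_cancel₀ hgne
        linear_combination m * hu - (v' * l₀) * hα₂d + ((α₂ : ℤ) * l₀) * hv - v * hl
          - t * hα₁g + ht
      have h3 : (α₁ : ℤ) ∣ u' * (m - β * l₀) :=
        ⟨t - k * l₀, by linear_combination h2 - l₀ * hk⟩
      obtain ⟨m₀, hm0⟩ := hcop1.dvd_of_dvd_mul_left h3
      exact ⟨m₀, l₀, by linarith, hl⟩
    · rintro ⟨m₀, l₀, hm, hl⟩
      refine ⟨u' * m₀ + k * l₀, ?_⟩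
      linear_combination u * hm + v * hl - ((α₁ : ℤ) * m₀ + β * l₀) * hu
        - ((α₂ : ℤ) * l₀) * hv + (u' * m₀ + k * l₀) * hα₁g + (v' * l₀) * hα₂d
        + ((g : ℤ) * l₀) * hk
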